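/- Let q be a prime power, K a finite field containing F_q, and a, b, c ∈ K with c ≠ ab and b ≠ a^q. Set B = (b − a^q)^{q+1} / (c − ab)^q. If the polynomial X^{q+1} − BX + B splits completely into linear factors over K, then the polynomial X^{q+1} + aX^q + bX + c also splits completely into linear factors over K. -/

import Mathlib

open Polynomial

/-- If `X^{q+1} - BX + B` splits completely over `K` for
`B = (b - a^q)^{q+1} / (c - ab)^q`, then `X^{q+1} + aX^q + bX + c` also splits
completely over `K`. -/
theorem stmt_3 (q : ℕ) (hq : IsPrimePow q)
    (K : Type) [Field K] [Fintype K]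
    (Fq : Subfield K) (hFq : Nat.card Fq = q)
    (a b c : K) (hc : c ≠ a * b) (hb : b ≠ a ^ q)
    (B : K) (hB : B = (b - a ^ q) ^ (q + 1) / (c - a * b) ^ q)
    (hsplit : Splits (X ^ (q + 1) - C B * X + C B)) :
    Splits (X ^ (q + 1) + C a * X ^ q + C b * X + C c) := by
  classical
  -- characteristic setup
  set p := ringChar K with hp
  haveI : CharP K p := ringChar.charP K
  haveI : CharP Fq p := CharP.subring' K p Fq.toSubring
  haveI : Fintype Fq := Fintype.ofFinite Fq
  obtain ⟨n, hprime, hcard⟩ := FiniteField.card Fq p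
  haveI : Fact p.Prime := ⟨hprime⟩
  have hqn : q = p ^ (n : ℕ) := by
    rw [← hFq, Nat.card_eq_fintype_card, hcard]
  haveI : CharP K[X] p := charP_of_injective_ringHom (C_injective : Function.Injective (C : K →+* K[X])) p
  have hneg : ∀ x : K, (-x) ^ q = -x ^ q := by
    intro x
    rw [hqn, ← neg_one_mul, mul_pow, neg_one_pow_char_pow, neg_one_mul]
  have hfrob : (X + C a : K[X]) ^ q = X ^ q + (C a) ^ q := by
    rw [hqn]; exact add_pow_char_pow X (C a) p ↑n
  -- nonvanishing
  have hβ : b - a ^ q ≠ 0 := sub_ne_zero.mpr hb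
  have hγ : c - a * b ≠ 0 := sub_ne_zero.mpr hc
  set t : K := -((b - a ^ q) / (c - a * b)) with ht
  have ht0 : t ≠ 0 := by
    simp only [ht, neg_ne_zero, div_ne_zero_iff]
    exact ⟨hβ, hγ⟩
  have htq : t ^ q = -((b - a ^ q) ^ q / (c - a * b) ^ q) := by
    rw [ht, hneg, div_pow]
  have hB1 : B = (a ^ q - b) * t ^ q := by
    rw [hB, htq]
    field_simp
    ring
  have hB2 : B = (c - a * b) * t ^ (q + 1) := by
    rw [hB, pow_succ t, htq, ht]
    field_simp
    rw [mul_comm b a, mul_comm (b - a ^ q) (c - a * b), mul_assoc, mul_div_mul_left _ _ hγ]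
    ring
  -- the key polynomial identity
  have key0 : (X ^ (q + 1) - C B * X + C B).comp (C t * (X + C a))
      = C t ^ (q + 1) * (X ^ (q + 1) + C a * X ^ q + C b * X + C c) := by
    have hC1 : (C B : K[X]) = ((C a) ^ q - C b) * C t ^ q := by
      simp only [hB1, map_mul, map_sub, map_pow]
    have hC2 : (C B : K[X]) = (C c - C a * C b) * C t ^ (q + 1) := by
      simp only [hB2, map_mul, map_sub, map_pow]
    rw [add_comp, sub_comp, mul_comp, pow_comp, X_comp, C_comp,
      mul_pow, pow_succ (X + C a), hfrob]
    linear_combination (-(C t * (X + C a))) * hC1 + hC2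
  have key : (X ^ (q + 1) + C a * X ^ q + C b * X + C c : K[X])
      = C ((t ^ (q + 1))⁻¹) * ((X ^ (q + 1) - C B * X + C B).comp (C t * (X + C a))) := by
    rw [key0, ← mul_assoc, ← map_pow, ← map_mul, inv_mul_cancel₀ (pow_ne_zero _ ht0), map_one, one_mul]
  rw [key]
  refine Splits.mul (Splits.C _) ?_
  refine Splits.comp_of_degree_le_one hsplit ?_
  refine (degree_mul_le _ _).trans ?_
  rw [degree_C ht0, degree_X_add_C]
  norm_num
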